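/- Let G_H = (V_H, E_H) be a finite simple undirected graph with |V_H| = n ≥ 1, and let G be the graph obtained from G_H by adding a single new vertex v adjacent to every vertex of V_H, all edges of G having unit length. Then there exists a walk in G starting at v in which every vertex of V_H appears among the first n steps (i.e., for every h ∈ V_H there is an index j with 1 ≤ j ≤ n and x_j = h) if and only if G_H admits a Hamiltonian path. (This is the combinatorial core of the NP-hardness reductions for k-SRG-v and COV-SET: in the constructed patrolling instance, where every vertex of V_H is a target with penetration time n, the whole target set V_H is a covering set from v iff G_H has a Hamiltonian path.) -/

import Mathlib

/-- The graph obtained from `G_H` by adding a single new vertex (represented by `none`)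
adjacent to every vertex of `G_H`. Two original vertices are adjacent iff they are
adjacent in `G_H`. -/
def coneGraph {V : Type*} (G_H : SimpleGraph V) : SimpleGraph (Option V) where
  Adj a b := a ≠ b ∧ ∀ u w : V, a = some u → b = some w → G_H.Adj u w
  symm := by
    constructor
    rintro a b ⟨hne, h⟩
    exact ⟨hne.symm, fun u w hb ha => (h w u ha hb).symm⟩
  loopless := by
    constructor
    rintro a ⟨hne, _⟩
    exact hne rfl

/-- There is a walk in the cone graph starting at the new vertex `none` in which every
vertex of `V` appears among the first `n` steps iff `G_H` admits a Hamiltonian path. -/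
theorem stmt0 {V : Type*} [Fintype V] (G_H : SimpleGraph V) (n : ℕ)
    (hn : n = Fintype.card V) (hn1 : 1 ≤ n) :
    (∃ x : ℕ → Option V, x 0 = none ∧
        (∀ i, i < n → (coneGraph G_H).Adj (x i) (x (i + 1))) ∧
        (∀ h : V, ∃ j, 1 ≤ j ∧ j ≤ n ∧ x j = some h)) ↔
      (∃ p : ℕ → V, (∀ i j, i < n → j < n → p i = p j → i = j) ∧
        (∀ h : V, ∃ i, i < n ∧ p i = h) ∧
        (∀ i, i + 1 < n → G_H.Adj (p i) (p (i + 1)))) := by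
  have hnpos : 0 < n := hn1
  constructor
  · rintro ⟨x, hx0, hadj, hcov⟩
    choose f hf1 hf2 hf3 using hcov
    -- f is injective
    have hfinj : Function.Injective f := by
      intro a b hab
      have : some a = some b := by rw [← hf3 a, ← hf3 b, hab]
      exact Option.some_injective _ this
    -- f maps onto Finset.Icc 1 n
    have himg : Finset.image f Finset.univ = Finset.Icc 1 n := by
      apply Finset.eq_of_subset_of_card_le
      · intro j hj
        simp only [Finset.mem_image, Finset.mem_univ, true_and] at hj
        obtain ⟨h, rfl⟩ := hj
        exact Finset.mem_Icc.mpr ⟨hf1 h, hf2 h⟩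
      · rw [Nat.card_Icc, Finset.card_image_of_injective _ hfinj,
          Finset.card_univ, ← hn]
        omega
    -- each position 1..n holds a vertex
    have hx : ∀ i : Fin n, ∃ h : V, x (i + 1 : ℕ) = some h := by
      intro i
      have : (i + 1 : ℕ) ∈ Finset.image f Finset.univ := by
        rw [himg, Finset.mem_Icc]
        exact ⟨by omega, by omega⟩
      simp only [Finset.mem_image, Finset.mem_univ, true_and] at this
      obtain ⟨h, hh⟩ := this
      exact ⟨h, by rw [← hh]; exact hf3 h⟩
    choose q hq using hx
    set p : ℕ → V := fun i => q ⟨i % n, Nat.mod_lt _ hnpos⟩ with hp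
    have hpx : ∀ i, i < n → x (i + 1) = some (p i) := by
      intro i hi
      have : i % n = i := Nat.mod_eq_of_lt hi
      simp only [hp]
      have := hq ⟨i % n, Nat.mod_lt _ hnpos⟩
      simpa [Nat.mod_eq_of_lt hi] using this
    -- q (equivalently p on [0,n)) is surjective
    have hsurj : Function.Surjective (fun i : Fin n => q i) := by
      intro h
      have h1 : 1 ≤ f h := hf1 h
      have h2 : f h ≤ n := hf2 h
      refine ⟨⟨f h - 1, by omega⟩, ?_⟩
      have hq' := hq ⟨f h - 1, by omega⟩
      have : x (f h - 1 + 1) = some h := by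
        have : f h - 1 + 1 = f h := by omega
        rw [this]; exact hf3 h
      have := this.symm.trans hq'
      exact (Option.some_injective _ this).symm
    have hbij : Function.Bijective (fun i : Fin n => q i) := by
      rw [Fintype.bijective_iff_surjective_and_card]
      exact ⟨hsurj, by simp [← hn]⟩
    refine ⟨p, ?_, ?_, ?_⟩
    · intro i j hi hj hij
      have : (⟨i % n, Nat.mod_lt _ hnpos⟩ : Fin n) = ⟨j % n, Nat.mod_lt _ hnpos⟩ :=
        hbij.1 hij
      have h' : i % n = j % n := Fin.mk.injEq _ _ _ _ ▸ this
      rwa [Nat.mod_eq_of_lt hi, Nat.mod_eq_of_lt hj] at h'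
    · intro h
      have h1 : 1 ≤ f h := hf1 h
      have h2 : f h ≤ n := hf2 h
      refine ⟨f h - 1, by omega, ?_⟩
      have hpx' := hpx (f h - 1) (by omega)
      have : f h - 1 + 1 = f h := by omega
      rw [this, hf3 h] at hpx'
      exact (Option.some_injective _ hpx').symm
    · intro i hi
      have hadj' := hadj (i + 1) hi
      have h1 := hpx i (by omega)
      have h2 := hpx (i + 1) hi
      exact hadj'.2 _ _ h1 h2
  · rintro ⟨p, hinj, hsurj, hadj⟩
    refine ⟨fun j => if j = 0 then none else some (p (j - 1)), rfl, ?_, ?_⟩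
    · intro i hi
      by_cases h0 : i = 0
      · subst h0
        simp only [if_pos rfl, if_neg (by norm_num : (1:ℕ) ≠ 0)]
        exact ⟨by simp, fun u w hu hw => by simp at hu⟩
      · simp only [if_neg h0, if_neg (by omega : i + 1 ≠ 0)]
        have hne : p (i - 1) ≠ p i := by
          intro heq
          have := hinj (i - 1) i (by omega) hi heq
          omega
        refine ⟨by simpa using hne, fun u w hu hw => ?_⟩
        have hu' : p (i - 1) = u := Option.some_injective _ hu
        have hw' : p (i + 1 - 1) = w := Option.some_injective _ hw
        rw [← hu', ← hw']
        have : i + 1 - 1 = (i - 1) + 1 := by omega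
        rw [this]
        exact hadj (i - 1) (by omega)
    · intro h
      obtain ⟨i, hi, hpi⟩ := hsurj h
      exact ⟨i + 1, by omega, by omega, by simp [hpi]⟩
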